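/- Let g, h be Leibniz algebras and L the DGLA of h-valued cochains on g⊕h vanishing on C(h,h). For linear maps l : g → gl(h), r : g → gl(h), ω : g⊗g → h, viewed as the element c = ω + l + r ∈ L₁, the bracket [x+α, y+β] = [x,y]_g + ω(x,y) + l_xβ + r_yα + [α,β]_h makes g⊕h a Leibniz algebra if and only if c is a Maurer–Cartan element of L, i.e. ∂̄c + ½[c,c]_C = 0. Moreover, two Maurer–Cartan elements c = ω+l+r and c′ = ω′+l′+r′ are gauge equivalent via φ ∈ L₀ = Hom(g,h), meaning c′ = c + [c,φ]_C + ∂̄φ + ½[∂̄φ,φ]_C, if and only if the corresponding 2-cocycles (l,r,ω) and (l′,r′,ω′) are equivalent via φ (i.e. l′_x − l_x = ad^L_{φ(x)}, r′_x − r_x = ad^R_{φ(x)}, ω′(x,y) − ω(x,y) = l_xφ(y) + r_yφ(x) + [φ(x),φ(y)]_h − φ([x,y]_g)). -/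
import Mathlib


/-- A `(k,q)`-unshuffle: a permutation of `Fin (k+q)` that is increasing on
the first `k` positions and on the last `q` positions. -/
def IsUnshuffle (k q : ℕ) (σ : Equiv.Perm (Fin (k + q))) : Prop :=
  (∀ i j : Fin (k + q), i < j → (j : ℕ) < k → σ i < σ j) ∧
  (∀ i j : Fin (k + q), i < j → k ≤ (i : ℕ) → σ i < σ j)

instance (k q : ℕ) (σ : Equiv.Perm (Fin (k + q))) :
    Decidable (IsUnshuffle k q σ) := by
  unfold IsUnshuffle; infer_instance

/-- The Balavoine composition `P ∘ Q` of Leibniz-algebra cochains. -/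
def cochainComp {A : Type*} [AddCommGroup A] (p q : ℕ)
    (P : (Fin (p + 1) → A) → A) (Q : (Fin (q + 1) → A) → A) :
    (Fin (p + q + 1) → A) → A := fun x =>
  ∑ k : Fin (p + 1), ∑ σ ∈ Finset.univ.filter (IsUnshuffle (k : ℕ) q),
    ((-1 : ℤ) ^ ((k : ℕ) * q) * (Equiv.Perm.sign σ : ℤ)) •
      P (fun jj : Fin (p + 1) =>
        if h1 : (jj : ℕ) < (k : ℕ) then
          x (Fin.castLE (by have := k.isLt; omega)
              (σ ⟨(jj : ℕ), by omega⟩))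
        else if (jj : ℕ) = (k : ℕ) then
          Q (fun i : Fin (q + 1) =>
            if h3 : (i : ℕ) < q then
              x (Fin.castLE (by have := k.isLt; omega)
                  (σ ⟨(k : ℕ) + (i : ℕ), by omega⟩))
            else x ⟨(k : ℕ) + q, by have := k.isLt; omega⟩)
        else x ⟨(jj : ℕ) + q, by have := jj.isLt; omega⟩)

/-- The graded commutator bracket `[P,Q]_C = P∘Q + (-1)^{pq+1} Q∘P`. -/
def cochainBracket {A : Type*} [AddCommGroup A] (p q : ℕ)
    (P : (Fin (p + 1) → A) → A) (Q : (Fin (q + 1) → A) → A) :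
    (Fin (p + q + 1) → A) → A := fun x =>
  cochainComp p q P Q x +
    ((-1 : ℤ) ^ (p * q + 1)) •
      cochainComp q p Q P (fun i => x (Fin.cast (by omega) i))

/-- The differential `∂̄ = [μ, ·]_C`. -/
def deltaBar {A : Type*} [AddCommGroup A] (p : ℕ)
    (μ : (Fin 2 → A) → A) (P : (Fin (p + 1) → A) → A) :
    (Fin (p + 1 + 1) → A) → A := fun x =>
  cochainBracket 1 p μ P (fun i => x (Fin.cast (by omega) i))


section AuxEval
variable {A : Type*} [AddCommGroup A]

lemma comp11_eval (P Q : (Fin 2 → A) → A) (x : Fin 3 → A) :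
    cochainComp 1 1 P Q x =
      P ![Q ![x 0, x 1], x 2] - P ![x 0, Q ![x 1, x 2]] + P ![x 1, Q ![x 0, x 2]] := by
  rw [cochainComp, Fin.sum_univ_two]
  rw [show (Finset.univ.filter (IsUnshuffle ((0 : Fin 2) : ℕ) 1)) = ({1} : Finset (Equiv.Perm (Fin (((0:Fin 2):ℕ)+1)))) from by decide]
  rw [show (Finset.univ.filter (IsUnshuffle ((1 : Fin 2) : ℕ) 1)) = ({1, Equiv.swap 0 1} : Finset (Equiv.Perm (Fin (((1:Fin 2):ℕ)+1)))) from by decide]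
  rw [Finset.sum_singleton, Finset.sum_pair (by decide)]
  trans P ![Q ![x 0, x 1], x 2] + (-P ![x 0, Q ![x 1, x 2]] + P ![x 1, Q ![x 0, x 2]])
  swap
  · abel
  refine congrArg₂ (· + ·) ?_ (congrArg₂ (· + ·) ?_ ?_)
  · rw [show ((-1:ℤ) ^ (((0:Fin 2):ℕ) * 1) * ((Equiv.Perm.sign (1 : Equiv.Perm (Fin (((0:Fin 2):ℕ)+1)))) : ℤ)) = 1 by decide, one_zsmul]
    refine congrArg P (funext fun j => ?_)
    fin_cases j
    · show Q _ = _
      refine congrArg Q (funext fun i => ?_)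
      fin_cases i <;> rfl
    · rfl
  · rw [show ((-1:ℤ) ^ (((1:Fin 2):ℕ) * 1) * ((Equiv.Perm.sign (1 : Equiv.Perm (Fin (((1:Fin 2):ℕ)+1)))) : ℤ)) = -1 by decide, neg_one_zsmul]
    refine congrArg Neg.neg (congrArg P (funext fun j => ?_))
    fin_cases j
    · rfl
    · show Q _ = _
      refine congrArg Q (funext fun i => ?_)
      fin_cases i <;> rfl
  · rw [show ((-1:ℤ) ^ (((1:Fin 2):ℕ) * 1) * ((Equiv.Perm.sign (Equiv.swap (0 : Fin (((1:Fin 2):ℕ)+1)) 1)) : ℤ)) = 1 by decide, one_zsmul]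
    refine congrArg P (funext fun j => ?_)
    fin_cases j
    · rfl
    · show Q _ = _
      refine congrArg Q (funext fun i => ?_)
      fin_cases i <;> rfl

lemma comp10_eval (P : (Fin 2 → A) → A) (Q : (Fin 1 → A) → A) (x : Fin 2 → A) :
    cochainComp 1 0 P Q x = P ![Q ![x 0], x 1] + P ![x 0, Q ![x 1]] := by
  rw [cochainComp, Fin.sum_univ_two]
  rw [show (Finset.univ.filter (IsUnshuffle ((0 : Fin 2) : ℕ) 0)) = ({1} : Finset (Equiv.Perm (Fin (((0:Fin 2):ℕ)+0)))) from by decide]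
  rw [show (Finset.univ.filter (IsUnshuffle ((1 : Fin 2) : ℕ) 0)) = ({1} : Finset (Equiv.Perm (Fin (((1:Fin 2):ℕ)+0)))) from by decide]
  rw [Finset.sum_singleton, Finset.sum_singleton]
  refine congrArg₂ (· + ·) ?_ ?_
  · rw [show ((-1:ℤ) ^ (((0:Fin 2):ℕ) * 0) * ((Equiv.Perm.sign (1 : Equiv.Perm (Fin (((0:Fin 2):ℕ)+0)))) : ℤ)) = 1 by decide, one_zsmul]
    refine congrArg P (funext fun j => ?_)
    fin_cases j
    · show Q _ = _
      refine congrArg Q (funext fun i => ?_)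
      fin_cases i <;> rfl
    · rfl
  · rw [show ((-1:ℤ) ^ (((1:Fin 2):ℕ) * 0) * ((Equiv.Perm.sign (1 : Equiv.Perm (Fin (((1:Fin 2):ℕ)+0)))) : ℤ)) = 1 by decide, one_zsmul]
    refine congrArg P (funext fun j => ?_)
    fin_cases j
    · rfl
    · show Q _ = _
      refine congrArg Q (funext fun i => ?_)
      fin_cases i <;> rfl

lemma comp01_eval (P : (Fin 1 → A) → A) (Q : (Fin 2 → A) → A) (x : Fin 2 → A) :
    cochainComp 0 1 P Q x = P ![Q ![x 0, x 1]] := by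
  rw [cochainComp, Fin.sum_univ_one]
  rw [show (Finset.univ.filter (IsUnshuffle ((0 : Fin 1) : ℕ) 1)) = ({1} : Finset (Equiv.Perm (Fin (((0:Fin 1):ℕ)+1)))) from by decide]
  rw [Finset.sum_singleton]
  rw [show ((-1:ℤ) ^ (((0:Fin 1):ℕ) * 1) * ((Equiv.Perm.sign (1 : Equiv.Perm (Fin (((0:Fin 1):ℕ)+1)))) : ℤ)) = 1 by decide, one_zsmul]
  refine congrArg P (funext fun j => ?_)
  fin_cases j
  show Q _ = _
  refine congrArg Q (funext fun i => ?_)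
  fin_cases i <;> rfl

lemma bracket11_eval (P Q : (Fin 2 → A) → A) (x : Fin 3 → A) :
    cochainBracket 1 1 P Q x =
      (P ![Q ![x 0, x 1], x 2] - P ![x 0, Q ![x 1, x 2]] + P ![x 1, Q ![x 0, x 2]]) +
      (Q ![P ![x 0, x 1], x 2] - Q ![x 0, P ![x 1, x 2]] + Q ![x 1, P ![x 0, x 2]]) := by
  rw [cochainBracket, comp11_eval, comp11_eval,
    show ((-1:ℤ) ^ (1 * 1 + 1)) = 1 by norm_num, one_zsmul]
  rfl

lemma deltaBar1_eval (μ P : (Fin 2 → A) → A) (x : Fin 3 → A) :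
    deltaBar 1 μ P x =
      (μ ![P ![x 0, x 1], x 2] - μ ![x 0, P ![x 1, x 2]] + μ ![x 1, P ![x 0, x 2]]) +
      (P ![μ ![x 0, x 1], x 2] - P ![x 0, μ ![x 1, x 2]] + P ![x 1, μ ![x 0, x 2]]) := by
  rw [deltaBar, bracket11_eval]
  rfl

lemma bracket10_eval (P : (Fin 2 → A) → A) (Q : (Fin 1 → A) → A) (x : Fin 2 → A) :
    cochainBracket 1 0 P Q x =
      P ![Q ![x 0], x 1] + P ![x 0, Q ![x 1]] - Q ![P ![x 0, x 1]] := by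
  rw [cochainBracket, comp10_eval, comp01_eval,
    show ((-1:ℤ) ^ (1 * 0 + 1)) = -1 by norm_num, neg_one_zsmul, ← sub_eq_add_neg]
  rfl

lemma deltaBar0_eval (μ : (Fin 2 → A) → A) (P : (Fin 1 → A) → A) (x : Fin 2 → A) :
    deltaBar 0 μ P x =
      μ ![P ![x 0], x 1] + μ ![x 0, P ![x 1]] - P ![μ ![x 0, x 1]] := by
  rw [deltaBar, bracket10_eval]
  rfl

end AuxEval

lemma half_smul {K : Type*} [Field K] [CharZero K] {M : Type*} [AddCommGroup M]
    [Module K M] (a : M) : (1 / 2 : K) • (a + a) = a := by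
  rw [← two_smul K a, smul_smul]
  norm_num

variable {K : Type*} [Field K]
  {g : Type*} [AddCommGroup g] [Module K g]
  {h : Type*} [AddCommGroup h] [Module K h]

/-- The 1-cochain `μ_g + μ_h` on the direct sum Leibniz algebra `g ⊕ h`. -/
def muSum (Bg : g →ₗ[K] g →ₗ[K] g) (Bh : h →ₗ[K] h →ₗ[K] h) :
    (Fin 2 → g × h) → g × h := fun x =>
  (Bg (x 0).1 (x 1).1, Bh (x 0).2 (x 1).2)

/-- The element `c = ω + l + r ∈ L₁` determined by linear maps
`l, r : g → gl(h)` and `ω : g ⊗ g → h`, via `l(x,α) = l_x α`, `r(α,x) = r_x α`. -/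
def cochainOf (l r : g →ₗ[K] Module.End K h) (ω : g →ₗ[K] g →ₗ[K] h) :
    (Fin 2 → g × h) → g × h := fun x =>
  (0, ω (x 0).1 (x 1).1 + l (x 0).1 (x 1).2 + r (x 1).1 (x 0).2)

/-- A degree-0 element `φ ∈ L₀ = Hom(g,h)` viewed as a 0-cochain on `g ⊕ h`. -/
def cochainOf0 (φ : g →ₗ[K] h) : (Fin 1 → g × h) → g × h := fun x =>
  (0, φ (x 0).1)

/-- The extension bracket on `g ⊕ h` determined by `(l, r, ω)`. -/
def extBracket (Bg : g →ₗ[K] g →ₗ[K] g) (Bh : h →ₗ[K] h →ₗ[K] h)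
    (l r : g →ₗ[K] Module.End K h) (ω : g →ₗ[K] g →ₗ[K] h)
    (u v : g × h) : g × h :=
  (Bg u.1 v.1, ω u.1 v.1 + l u.1 v.2 + r v.1 u.2 + Bh u.2 v.2)


lemma MC_key [CharZero K]
    (Bg : g →ₗ[K] g →ₗ[K] g)
    (hg : ∀ x y z : g, Bg x (Bg y z) = Bg (Bg x y) z + Bg y (Bg x z))
    (Bh : h →ₗ[K] h →ₗ[K] h)
    (hh : ∀ a b c : h, Bh a (Bh b c) = Bh (Bh a b) c + Bh b (Bh a c))
    (l r : g →ₗ[K] Module.End K h) (ω : g →ₗ[K] g →ₗ[K] h)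
    (x : Fin 3 → g × h) :
    deltaBar 1 (muSum Bg Bh) (cochainOf l r ω) x +
      (1 / 2 : K) • cochainBracket 1 1 (cochainOf l r ω) (cochainOf l r ω) x =
    extBracket Bg Bh l r ω (extBracket Bg Bh l r ω (x 0) (x 1)) (x 2) +
      extBracket Bg Bh l r ω (x 1) (extBracket Bg Bh l r ω (x 0) (x 2)) -
      extBracket Bg Bh l r ω (x 0) (extBracket Bg Bh l r ω (x 1) (x 2)) := by
  rw [deltaBar1_eval, bracket11_eval, half_smul]
  set u := x 0; set v := x 1; set w := x 2
  simp only [muSum, cochainOf, extBracket, Matrix.cons_val_zero, Matrix.cons_val_one,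
    Matrix.head_cons, map_add, map_zero, LinearMap.add_apply, LinearMap.zero_apply,
    Prod.mk_add_mk, Prod.mk_sub_mk, add_zero, zero_add, sub_zero, zero_sub]
  rw [Prod.ext_iff]
  constructor
  · simp only
    rw [hg u.1 v.1 w.1]
    abel
  · simp only
    rw [hh u.2 v.2 w.2]
    abel

lemma gauge_eval [CharZero K]
    (Bg : g →ₗ[K] g →ₗ[K] g) (Bh : h →ₗ[K] h →ₗ[K] h)
    (l r : g →ₗ[K] Module.End K h) (ω : g →ₗ[K] g →ₗ[K] h) (φ : g →ₗ[K] h)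
    (x : Fin 2 → g × h) :
    cochainOf l r ω x +
      cochainBracket 1 0 (cochainOf l r ω) (cochainOf0 φ) x +
      deltaBar 0 (muSum Bg Bh) (cochainOf0 φ) x +
      (1 / 2 : K) • cochainBracket 1 0
        (deltaBar 0 (muSum Bg Bh) (cochainOf0 φ)) (cochainOf0 φ) x =
    (0, ω (x 0).1 (x 1).1 + l (x 0).1 (x 1).2 + r (x 1).1 (x 0).2 +
      (l (x 0).1 (φ (x 1).1) + r (x 1).1 (φ (x 0).1) +
        Bh (φ (x 0).1) (φ (x 1).1) - φ (Bg (x 0).1 (x 1).1)) +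
      (Bh (φ (x 0).1) (x 1).2 + Bh (x 0).2 (φ (x 1).1))) := by
  rw [bracket10_eval, bracket10_eval, deltaBar0_eval, deltaBar0_eval, deltaBar0_eval,
    deltaBar0_eval]
  set u := x 0; set v := x 1
  simp only [muSum, cochainOf, cochainOf0, Matrix.cons_val_zero, Matrix.cons_val_one,
    Matrix.head_cons, Matrix.cons_val_fin_one, map_add, map_zero, LinearMap.add_apply,
    LinearMap.zero_apply, Prod.mk_add_mk, Prod.mk_sub_mk, add_zero, zero_add, sub_zero,
    zero_sub, Prod.smul_mk, smul_zero]
  rw [Prod.ext_iff]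
  constructor
  · simp
  · simp only
    rw [half_smul (Bh (φ u.1) (φ v.1))]
    abel

/-- Proposition 4.5 and Theorem 4.7: `(g⊕h, [·,·]_{(l,r,ω)})` is a Leibniz
algebra iff `c = ω + l + r` is a Maurer–Cartan element of the DGLA `L`
(`∂̄c + ½[c,c]_C = 0`); and two Maurer–Cartan elements `c, c'` are gauge
equivalent via `φ ∈ L₀` (`c' = c + [c,φ]_C + ∂̄φ + ½[∂̄φ,φ]_C`) iff the
corresponding non-abelian 2-cocycles are equivalent via `φ`. -/
theorem MC_correspondence
    (Bg : g →ₗ[K] g →ₗ[K] g)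
    (hg : ∀ x y z : g, Bg x (Bg y z) = Bg (Bg x y) z + Bg y (Bg x z))
    (Bh : h →ₗ[K] h →ₗ[K] h)
    (hh : ∀ a b c : h, Bh a (Bh b c) = Bh (Bh a b) c + Bh b (Bh a c))
    [CharZero K] :
    -- Proposition 4.5: Leibniz iff Maurer–Cartan
    (∀ (l r : g →ₗ[K] Module.End K h) (ω : g →ₗ[K] g →ₗ[K] h),
      (∀ u v w : g × h,
        extBracket Bg Bh l r ω u (extBracket Bg Bh l r ω v w) =
          extBracket Bg Bh l r ω (extBracket Bg Bh l r ω u v) w +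
            extBracket Bg Bh l r ω v (extBracket Bg Bh l r ω u w))
      ↔
      (∀ x : Fin 3 → g × h,
        deltaBar 1 (muSum Bg Bh) (cochainOf l r ω) x +
          (1 / 2 : K) •
            cochainBracket 1 1 (cochainOf l r ω) (cochainOf l r ω) x = 0)) ∧
    -- Theorem 4.7: gauge equivalence iff cocycle equivalence
    (∀ (l r l' r' : g →ₗ[K] Module.End K h) (ω ω' : g →ₗ[K] g →ₗ[K] h)
        (φ : g →ₗ[K] h),
      (∀ x : Fin 3 → g × h,
        deltaBar 1 (muSum Bg Bh) (cochainOf l r ω) x +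
          (1 / 2 : K) •
            cochainBracket 1 1 (cochainOf l r ω) (cochainOf l r ω) x = 0) →
      (∀ x : Fin 3 → g × h,
        deltaBar 1 (muSum Bg Bh) (cochainOf l' r' ω') x +
          (1 / 2 : K) •
            cochainBracket 1 1 (cochainOf l' r' ω') (cochainOf l' r' ω') x
              = 0) →
      ((∀ x : Fin 2 → g × h,
          cochainOf l' r' ω' x =
            cochainOf l r ω x +
              cochainBracket 1 0 (cochainOf l r ω) (cochainOf0 φ) x +
              deltaBar 0 (muSum Bg Bh) (cochainOf0 φ) x +
              (1 / 2 : K) •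
                cochainBracket 1 0
                  (deltaBar 0 (muSum Bg Bh) (cochainOf0 φ)) (cochainOf0 φ) x)
        ↔
        ((∀ (x : g) (α : h), l' x α - l x α = Bh (φ x) α) ∧
         (∀ (x : g) (α : h), r' x α - r x α = Bh α (φ x)) ∧
         (∀ x y : g, ω' x y - ω x y =
            l x (φ y) + r y (φ x) + Bh (φ x) (φ y) - φ (Bg x y))))) := by
  constructor
  · -- Proposition 4.5
    intro l r ω
    constructor
    · intro hL x
      rw [MC_key Bg hg Bh hh l r ω x, hL (x 0) (x 1) (x 2)]
      abel
    · intro hMC u v w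
      have hx := hMC ![u, v, w]
      rw [MC_key Bg hg Bh hh] at hx
      simp only [show (![u, v, w] 0) = u from rfl, show (![u, v, w] 1) = v from rfl,
        show (![u, v, w] 2) = w from rfl] at hx
      exact (sub_eq_zero.mp hx).symm
  · -- Theorem 4.7
    intro l r l' r' ω ω' φ _ _
    constructor
    · intro hGauge
      refine ⟨?_, ?_, ?_⟩
      · intro a α
        have hx := hGauge ![((a : g), (0 : h)), ((0 : g), α)]
        rw [gauge_eval] at hx
        simp only [cochainOf,
          show ((![((a : g), (0 : h)), ((0 : g), α)]) 0) = (a, (0 : h)) from rfl,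
          show ((![((a : g), (0 : h)), ((0 : g), α)]) 1) = ((0 : g), α) from rfl,
          map_zero, LinearMap.zero_apply, add_zero, zero_add, sub_zero, zero_sub,
          neg_zero, Prod.mk.injEq, true_and] at hx
        rw [hx]
        abel
      · intro a α
        have hx := hGauge ![((0 : g), α), ((a : g), (0 : h))]
        rw [gauge_eval] at hx
        simp only [cochainOf,
          show ((![((0 : g), α), ((a : g), (0 : h))]) 0) = ((0 : g), α) from rfl,
          show ((![((0 : g), α), ((a : g), (0 : h))]) 1) = (a, (0 : h)) from rfl,
          map_zero, LinearMap.zero_apply, add_zero, zero_add, sub_zero, zero_sub,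
          neg_zero, Prod.mk.injEq, true_and] at hx
        rw [hx]
        abel
      · intro a b
        have hx := hGauge ![((a : g), (0 : h)), ((b : g), (0 : h))]
        rw [gauge_eval] at hx
        simp only [cochainOf,
          show ((![((a : g), (0 : h)), ((b : g), (0 : h))]) 0) = (a, (0 : h)) from rfl,
          show ((![((a : g), (0 : h)), ((b : g), (0 : h))]) 1) = (b, (0 : h)) from rfl,
          map_zero, LinearMap.zero_apply, add_zero, zero_add, sub_zero, zero_sub,
          neg_zero, Prod.mk.injEq, true_and] at hx
        rw [hx]
        abel
    · rintro ⟨h1, h2, h3⟩ x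
      rw [gauge_eval]
      simp only [cochainOf]
      rw [Prod.ext_iff]
      refine ⟨rfl, ?_⟩
      simp only
      rw [sub_eq_iff_eq_add.mp (h3 (x 0).1 (x 1).1),
        sub_eq_iff_eq_add.mp (h1 (x 0).1 (x 1).2),
        sub_eq_iff_eq_add.mp (h2 (x 1).1 (x 0).2)]
      abel
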